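/- arXiv:1108.4939 — 2 statements merged into one kernel-verified Lean document; each statement's English description precedes it below -/
import Mathlib

section
/- Convexity inequality for the weak limits of the pressure: if ρ_ε ≥ 0 converge weakly in L¹ to ρ, ρ_ε^γ + δρ_ε^β converge weakly to P̄, and ρ_ε^{γ+1} + δρ_ε^{β+1} converge weakly to Q̄ (γ, β > 1, δ ≥ 0), then P̄·ρ − Q̄ ≤ 0 almost everywhere. -/
open MeasureTheory Filter Topology

/-- If `g` is integrable and its integral against every nonnegative bounded measurable
test function is nonnegative, then `g ≥ 0` a.e. -/
lemma ae_nonneg_of_forall_integral_mul {α : Type*} [MeasurableSpace α] {μ : Measure α}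
    {g : α → ℝ} (hg : Integrable g μ)
    (h : ∀ φ : α → ℝ, Measurable φ → (∃ C, ∀ x, |φ x| ≤ C) → (∀ x, 0 ≤ φ x) →
      0 ≤ ∫ x, g x * φ x ∂μ) : 0 ≤ᵐ[μ] g := by
  apply ae_nonneg_of_forall_setIntegral_nonneg hg
  intro s hs _
  have h1 := h (s.indicator 1) (measurable_one.indicator hs)
    ⟨1, fun x => by by_cases hx : x ∈ s <;> simp [Set.indicator, hx]⟩
    (fun x => by by_cases hx : x ∈ s <;> simp [Set.indicator, hx])
  have h2 : (fun x => g x * s.indicator 1 x) = s.indicator g := by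
    funext x; by_cases hx : x ∈ s <;> simp [Set.indicator, hx]
  rwa [h2, integral_indicator hs] at h1

lemma rpow_succ_nonneg {a c : ℝ} (ha : 0 ≤ a) (hc : 0 < c) : a ^ (c + 1) = a ^ c * a := by
  rcases eq_or_lt_of_le ha with h | h
  · rw [← h, Real.zero_rpow (by positivity), Real.zero_rpow (by positivity)]
    ring
  · rw [Real.rpow_add h, Real.rpow_one]

lemma mono_ineq {γ β δ a b : ℝ} (hγ : 0 < γ) (hβ : 0 < β) (hδ : 0 ≤ δ)
    (ha : 0 ≤ a) (hb : 0 ≤ b) :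
    0 ≤ (a ^ γ + δ * a ^ β - (b ^ γ + δ * b ^ β)) * (a - b) := by
  rcases le_total a b with h | h
  · have h1 := Real.rpow_le_rpow ha h hγ.le
    have h2 := Real.rpow_le_rpow ha h hβ.le
    have h3 : 0 ≤ (b ^ γ + δ * b ^ β - (a ^ γ + δ * a ^ β)) * (b - a) := by
      apply mul_nonneg <;> nlinarith
    nlinarith
  · have h1 := Real.rpow_le_rpow hb h hγ.le
    have h2 := Real.rpow_le_rpow hb h hβ.le
    apply mul_nonneg <;> nlinarith

lemma integrable_mul_bdd {α : Type*} [MeasurableSpace α] {μ : Measure α} {f g : α → ℝ}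
    (hf : Integrable f μ) (hm : AEStronglyMeasurable g μ) (C : ℝ) (hg : ∀ x, |g x| ≤ C) :
    Integrable (fun x => f x * g x) μ := by
  have h := hf.bdd_mul (c := C) hm (ae_of_all _ fun x => by simpa [Real.norm_eq_abs] using hg x)
  exact h.congr (ae_of_all _ fun x => mul_comm _ _)

lemma key_lemma {α : Type*} [MeasurableSpace α] (μ : Measure α) [IsFiniteMeasure μ]
    (γ β δ : ℝ) (hγ : 1 < γ) (hβ : 1 < β) (hδ : 0 ≤ δ)
    (ρn : ℕ → α → ℝ) (ρ Pbar Qbar : α → ℝ)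
    (hpos : ∀ n x, 0 ≤ ρn n x)
    (hint : ∀ n, Integrable (ρn n) μ ∧
      Integrable (fun x => ρn n x ^ γ + δ * ρn n x ^ β) μ ∧
      Integrable (fun x => ρn n x ^ (γ + 1) + δ * ρn n x ^ (β + 1)) μ)
    (hlim : Integrable ρ μ ∧ Integrable Pbar μ ∧ Integrable Qbar μ)
    (hw1 : ∀ φ : α → ℝ, Measurable φ → (∃ C, ∀ x, |φ x| ≤ C) →
      Tendsto (fun n => ∫ x, ρn n x * φ x ∂μ) atTop (𝓝 (∫ x, ρ x * φ x ∂μ)))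
    (hw2 : ∀ φ : α → ℝ, Measurable φ → (∃ C, ∀ x, |φ x| ≤ C) →
      Tendsto (fun n => ∫ x, (ρn n x ^ γ + δ * ρn n x ^ β) * φ x ∂μ) atTop
        (𝓝 (∫ x, Pbar x * φ x ∂μ)))
    (hw3 : ∀ φ : α → ℝ, Measurable φ → (∃ C, ∀ x, |φ x| ≤ C) →
      Tendsto (fun n => ∫ x, (ρn n x ^ (γ + 1) + δ * ρn n x ^ (β + 1)) * φ x ∂μ) atTop
        (𝓝 (∫ x, Qbar x * φ x ∂μ)))
    (b : α → ℝ) (hbm : Measurable b) (K : ℝ) (hb0 : ∀ x, 0 ≤ b x) (hbK : ∀ x, b x ≤ K) :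
    0 ≤ᵐ[μ] fun x => Qbar x - Pbar x * b x - (b x ^ γ + δ * b x ^ β) * ρ x
      + (b x ^ γ + δ * b x ^ β) * b x := by
  have hγ0 : (0:ℝ) < γ := by linarith
  have hβ0 : (0:ℝ) < β := by linarith
  set K' : ℝ := max K 0 with hK'def
  have hK'0 : (0:ℝ) ≤ K' := le_max_right _ _
  have hbK' : ∀ x, b x ≤ K' := fun x => (hbK x).trans (le_max_left _ _)
  have hbabs : ∀ x, |b x| ≤ K' := fun x => by
    rw [abs_of_nonneg (hb0 x)]; exact hbK' x
  set CP : ℝ := K' ^ γ + δ * K' ^ β with hCPdef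
  have hCP0 : 0 ≤ CP := add_nonneg (Real.rpow_nonneg hK'0 _)
    (mul_nonneg hδ (Real.rpow_nonneg hK'0 _))
  have hPb0 : ∀ x, 0 ≤ b x ^ γ + δ * b x ^ β := fun x =>
    add_nonneg (Real.rpow_nonneg (hb0 x) _) (mul_nonneg hδ (Real.rpow_nonneg (hb0 x) _))
  have hPbbd : ∀ x, |b x ^ γ + δ * b x ^ β| ≤ CP := fun x => by
    rw [abs_of_nonneg (hPb0 x)]
    exact add_le_add (Real.rpow_le_rpow (hb0 x) (hbK' x) hγ0.le)
      (mul_le_mul_of_nonneg_left (Real.rpow_le_rpow (hb0 x) (hbK' x) hβ0.le) hδ)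
  have hPbm : Measurable fun x => b x ^ γ + δ * b x ^ β := by measurability
  -- integrability of the pieces of the limit function
  have hiPbar_b : Integrable (fun x => Pbar x * b x) μ :=
    (hlim.2.1.bdd_mul (c := K') hbm.aestronglyMeasurable
      (ae_of_all _ fun x => by simpa [Real.norm_eq_abs] using hbabs x)).congr
      (ae_of_all _ fun x => mul_comm _ _)
  have hiPb_rho : Integrable (fun x => (b x ^ γ + δ * b x ^ β) * ρ x) μ :=
    hlim.1.bdd_mul (c := CP) hPbm.aestronglyMeasurable
      (ae_of_all _ fun x => by simpa [Real.norm_eq_abs] using hPbbd x)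
  have hiPb_b : Integrable (fun x => (b x ^ γ + δ * b x ^ β) * b x) μ := by
    refine (integrable_const (CP * K')).mono' (hPbm.mul hbm).aestronglyMeasurable
      (ae_of_all _ fun x => ?_)
    rw [Real.norm_eq_abs, abs_mul]
    exact mul_le_mul (hPbbd x) (hbabs x) (abs_nonneg _) hCP0
  apply ae_nonneg_of_forall_integral_mul
    (((hlim.2.2.sub hiPbar_b).sub hiPb_rho).add hiPb_b)
  intro φ hφm ⟨Cφ, hφb⟩ hφ0
  have hφabs : ∀ x, |φ x| ≤ |Cφ| := fun x => (hφb x).trans (le_abs_self _)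
  have hCφ0 : (0:ℝ) ≤ |Cφ| := abs_nonneg _
  -- bounded test functions
  have hbφbd : ∀ x, |b x * φ x| ≤ K' * |Cφ| := fun x => by
    rw [abs_mul]; exact mul_le_mul (hbabs x) (hφabs x) (abs_nonneg _) hK'0
  have hPbφbd : ∀ x, |(b x ^ γ + δ * b x ^ β) * φ x| ≤ CP * |Cφ| := fun x => by
    rw [abs_mul]; exact mul_le_mul (hPbbd x) (hφabs x) (abs_nonneg _) hCP0
  -- per-n integrabilities
  have hA : ∀ n, Integrable (fun x => (ρn n x ^ (γ + 1) + δ * ρn n x ^ (β + 1)) * φ x) μ :=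
    fun n => integrable_mul_bdd (hint n).2.2 hφm.aestronglyMeasurable |Cφ| hφabs
  have hB : ∀ n, Integrable (fun x => (ρn n x ^ γ + δ * ρn n x ^ β) * (b x * φ x)) μ :=
    fun n => integrable_mul_bdd (hint n).2.1 (hbm.mul hφm).aestronglyMeasurable
      (K' * |Cφ|) hbφbd
  have hC : ∀ n, Integrable (fun x => ρn n x * ((b x ^ γ + δ * b x ^ β) * φ x)) μ :=
    fun n => integrable_mul_bdd (hint n).1 (hPbm.mul hφm).aestronglyMeasurable
      (CP * |Cφ|) hPbφbd
  have hD : Integrable (fun x => (b x ^ γ + δ * b x ^ β) * b x * φ x) μ :=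
    integrable_mul_bdd hiPb_b hφm.aestronglyMeasurable |Cφ| hφabs
  set D : ℝ := ∫ x, (b x ^ γ + δ * b x ^ β) * b x * φ x ∂μ with hDdef
  have key_n : ∀ n, 0 ≤ (∫ x, (ρn n x ^ (γ + 1) + δ * ρn n x ^ (β + 1)) * φ x ∂μ)
      - (∫ x, (ρn n x ^ γ + δ * ρn n x ^ β) * (b x * φ x) ∂μ)
      - (∫ x, ρn n x * ((b x ^ γ + δ * b x ^ β) * φ x) ∂μ) + D := by
    intro n
    have hEq : ∀ x, ((ρn n x ^ γ + δ * ρn n x ^ β - (b x ^ γ + δ * b x ^ β))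
          * (ρn n x - b x)) * φ x
        = (ρn n x ^ (γ + 1) + δ * ρn n x ^ (β + 1)) * φ x
          - (ρn n x ^ γ + δ * ρn n x ^ β) * (b x * φ x)
          - ρn n x * ((b x ^ γ + δ * b x ^ β) * φ x)
          + (b x ^ γ + δ * b x ^ β) * b x * φ x := by
      intro x
      rw [rpow_succ_nonneg (hpos n x) hγ0, rpow_succ_nonneg (hpos n x) hβ0]
      ring
    have h0 : (0:ℝ) ≤ ∫ x, ((ρn n x ^ γ + δ * ρn n x ^ β - (b x ^ γ + δ * b x ^ β))
        * (ρn n x - b x)) * φ x ∂μ :=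
      integral_nonneg fun x => mul_nonneg (mono_ineq hγ0 hβ0 hδ (hpos n x) (hb0 x)) (hφ0 x)
    calc (0:ℝ) ≤ _ := h0
      _ = _ := by
        have hAB : Integrable (fun x => (ρn n x ^ (γ + 1) + δ * ρn n x ^ (β + 1)) * φ x
            - (ρn n x ^ γ + δ * ρn n x ^ β) * (b x * φ x)) μ := (hA n).sub (hB n)
        have hABC : Integrable (fun x => (ρn n x ^ (γ + 1) + δ * ρn n x ^ (β + 1)) * φ x
            - (ρn n x ^ γ + δ * ρn n x ^ β) * (b x * φ x)
            - ρn n x * ((b x ^ γ + δ * b x ^ β) * φ x)) μ := hAB.sub (hC n)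
        simp only [hEq]
        rw [integral_add hABC hD, integral_sub hAB (hC n), integral_sub (hA n) (hB n)]
  have hw3' := hw3 φ hφm ⟨Cφ, hφb⟩
  have hw2' := hw2 (fun x => b x * φ x) (hbm.mul hφm) ⟨K' * |Cφ|, hbφbd⟩
  have hw1' := hw1 (fun x => (b x ^ γ + δ * b x ^ β) * φ x) (hPbm.mul hφm)
    ⟨CP * |Cφ|, hPbφbd⟩
  have hT := ((hw3'.sub hw2').sub hw1').add_const D
  have hlim0 : 0 ≤ (∫ x, Qbar x * φ x ∂μ) - (∫ x, Pbar x * (b x * φ x) ∂μ)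
      - (∫ x, ρ x * ((b x ^ γ + δ * b x ^ β) * φ x) ∂μ) + D :=
    ge_of_tendsto' hT key_n
  -- identify the final integral
  have hiQφ : Integrable (fun x => Qbar x * φ x) μ :=
    integrable_mul_bdd hlim.2.2 hφm.aestronglyMeasurable |Cφ| hφabs
  have hiPφ : Integrable (fun x => Pbar x * (b x * φ x)) μ :=
    integrable_mul_bdd hlim.2.1 (hbm.mul hφm).aestronglyMeasurable (K' * |Cφ|) hbφbd
  have hiρφ : Integrable (fun x => ρ x * ((b x ^ γ + δ * b x ^ β) * φ x)) μ :=
    integrable_mul_bdd hlim.1 (hPbm.mul hφm).aestronglyMeasurable (CP * |Cφ|) hPbφbd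
  have hρw : (fun x => (Qbar x - Pbar x * b x - (b x ^ γ + δ * b x ^ β) * ρ x
      + (b x ^ γ + δ * b x ^ β) * b x) * φ x)
      = fun x => Qbar x * φ x - Pbar x * (b x * φ x)
        - ρ x * ((b x ^ γ + δ * b x ^ β) * φ x)
        + (b x ^ γ + δ * b x ^ β) * b x * φ x := funext fun x => by ring
  have hQP : Integrable (fun x => Qbar x * φ x - Pbar x * (b x * φ x)) μ := hiQφ.sub hiPφ
  have hQPρ : Integrable (fun x => Qbar x * φ x - Pbar x * (b x * φ x)
      - ρ x * ((b x ^ γ + δ * b x ^ β) * φ x)) μ := hQP.sub hiρφ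
  simp only [Pi.sub_apply, Pi.add_apply]
  rw [hρw, integral_add hQPρ hD, integral_sub hQP hiρφ, integral_sub hiQφ hiPφ]
  exact hlim0

/-- Convexity inequality for weak limits of the pressure: if ρₙ ≥ 0 converge weakly in L¹
to ρ, ρₙ^γ + δρₙ^β converge weakly to P̄, and ρₙ^{γ+1} + δρₙ^{β+1} converge weakly to Q̄,
then P̄ρ − Q̄ ≤ 0 a.e. -/
theorem stmt_12 {α : Type*} [MeasurableSpace α] (μ : Measure α) [IsFiniteMeasure μ]
    (γ β δ : ℝ) (hγ : 1 < γ) (hβ : 1 < β) (hδ : 0 ≤ δ)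
    (ρn : ℕ → α → ℝ) (ρ Pbar Qbar : α → ℝ)
    (hpos : ∀ n x, 0 ≤ ρn n x)
    (hint : ∀ n, Integrable (ρn n) μ ∧
      Integrable (fun x => ρn n x ^ γ + δ * ρn n x ^ β) μ ∧
      Integrable (fun x => ρn n x ^ (γ + 1) + δ * ρn n x ^ (β + 1)) μ)
    (hlim : Integrable ρ μ ∧ Integrable Pbar μ ∧ Integrable Qbar μ)
    (hw1 : ∀ φ : α → ℝ, Measurable φ → (∃ C, ∀ x, |φ x| ≤ C) →
      Tendsto (fun n => ∫ x, ρn n x * φ x ∂μ) atTop (𝓝 (∫ x, ρ x * φ x ∂μ)))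
    (hw2 : ∀ φ : α → ℝ, Measurable φ → (∃ C, ∀ x, |φ x| ≤ C) →
      Tendsto (fun n => ∫ x, (ρn n x ^ γ + δ * ρn n x ^ β) * φ x ∂μ) atTop
        (𝓝 (∫ x, Pbar x * φ x ∂μ)))
    (hw3 : ∀ φ : α → ℝ, Measurable φ → (∃ C, ∀ x, |φ x| ≤ C) →
      Tendsto (fun n => ∫ x, (ρn n x ^ (γ + 1) + δ * ρn n x ^ (β + 1)) * φ x ∂μ) atTop
        (𝓝 (∫ x, Qbar x * φ x ∂μ))) :
    ∀ᵐ x ∂μ, Pbar x * ρ x - Qbar x ≤ 0 := by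
  have hρ0 : 0 ≤ᵐ[μ] ρ := by
    apply ae_nonneg_of_forall_integral_mul hlim.1
    intro φ hφm hφb hφ0
    exact ge_of_tendsto' (hw1 φ hφm hφb)
      (fun n => integral_nonneg fun x => mul_nonneg (hpos n x) (hφ0 x))
  have hsm := hlim.1.1
  set ρ' := hsm.mk ρ with hρ'def
  have hρ'm : Measurable ρ' := hsm.stronglyMeasurable_mk.measurable
  have hρeq : ρ =ᵐ[μ] ρ' := hsm.ae_eq_mk
  have hk : ∀ k : ℕ, ∀ᵐ x ∂μ, 0 ≤ Qbar x - Pbar x * min (max (ρ' x) 0) (k : ℝ)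
      - (min (max (ρ' x) 0) (k : ℝ) ^ γ + δ * min (max (ρ' x) 0) (k : ℝ) ^ β) * ρ x
      + (min (max (ρ' x) 0) (k : ℝ) ^ γ + δ * min (max (ρ' x) 0) (k : ℝ) ^ β)
        * min (max (ρ' x) 0) (k : ℝ) := by
    intro k
    have := key_lemma μ γ β δ hγ hβ hδ ρn ρ Pbar Qbar hpos hint hlim hw1 hw2 hw3
      (fun x => min (max (ρ' x) 0) (k : ℝ))
      ((hρ'm.max measurable_const).min measurable_const) (k : ℝ)
      (fun x => le_min (le_max_right _ _) (Nat.cast_nonneg k))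
      (fun x => min_le_right _ _)
    exact this.mono fun x h => by simpa using h
  have hall : ∀ᵐ x ∂μ, ∀ k : ℕ, 0 ≤ Qbar x - Pbar x * min (max (ρ' x) 0) (k : ℝ)
      - (min (max (ρ' x) 0) (k : ℝ) ^ γ + δ * min (max (ρ' x) 0) (k : ℝ) ^ β) * ρ x
      + (min (max (ρ' x) 0) (k : ℝ) ^ γ + δ * min (max (ρ' x) 0) (k : ℝ) ^ β)
        * min (max (ρ' x) 0) (k : ℝ) := ae_all_iff.2 hk
  filter_upwards [hall, hρ0, hρeq] with x h1 h2 h3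
  have hb : min (max (ρ' x) 0) ((⌈ρ' x⌉₊ : ℕ) : ℝ) = ρ x := by
    rw [max_eq_left (h3 ▸ h2), min_eq_left (Nat.le_ceil _), ← h3]
  have h1k := h1 ⌈ρ' x⌉₊
  rw [hb] at h1k
  linarith
end

section
/- If ρ_ε ≥ 0 are uniformly bounded in L^{γ+1}((0,T)×Ω), converge weakly to ρ, and the weak limit of ρ_ε log ρ_ε equals ρ log ρ almost everywhere, then ρ_ε → ρ strongly in L¹((0,T)×Ω). -/
open MeasureTheory Filter Topology Set
open scoped ENNReal NNReal


lemma log_ge_one_sub_inv {x : ℝ} (hx : 0 < x) : 1 - x⁻¹ ≤ Real.log x := by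
  have h := Real.log_le_sub_one_of_pos (inv_pos.2 hx)
  rw [Real.log_inv] at h; linarith

/-- Bregman divergence of `z log z` dominates `(√a - √b)²`. -/
lemma convex_key {a b : ℝ} (ha : 0 ≤ a) (hb : 0 < b) :
    (Real.sqrt a - Real.sqrt b) ^ 2 ≤
      a * Real.log a - b * Real.log b - (1 + Real.log b) * (a - b) := by
  have hsb : Real.sqrt b ^ 2 = b := Real.sq_sqrt hb.le
  rcases eq_or_lt_of_le ha with h0 | ha'
  · simp [← h0, Real.log_zero, hsb]
    nlinarith [hsb]
  · have hsa : Real.sqrt a ^ 2 = a := Real.sq_sqrt ha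
    have hsa0 : 0 < Real.sqrt a := Real.sqrt_pos.2 ha'
    have hsb0 : 0 < Real.sqrt b := Real.sqrt_pos.2 hb
    have hla : Real.log a = 2 * Real.log (Real.sqrt a) := by
      rw [Real.log_sqrt ha]; ring
    have hlb : Real.log b = 2 * Real.log (Real.sqrt b) := by
      rw [Real.log_sqrt hb.le]; ring
    have hdiv : 0 < Real.sqrt a / Real.sqrt b := div_pos hsa0 hsb0
    have h2 : 1 - (Real.sqrt a / Real.sqrt b)⁻¹ ≤
        Real.log (Real.sqrt a) - Real.log (Real.sqrt b) := by
      have := log_ge_one_sub_inv hdiv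
      rwa [Real.log_div hsa0.ne' hsb0.ne'] at this
    have hinv : (Real.sqrt a / Real.sqrt b)⁻¹ = Real.sqrt b / Real.sqrt a := by
      rw [inv_div]
    rw [hinv] at h2
    have h3 : 2 * a * (1 - Real.sqrt b / Real.sqrt a) ≤
        2 * a * (Real.log (Real.sqrt a) - Real.log (Real.sqrt b)) := by
      apply mul_le_mul_of_nonneg_left h2; linarith
    have h4 : a * (Real.sqrt b / Real.sqrt a) = Real.sqrt a * Real.sqrt b := by
      rw [mul_div_assoc'] ; rw [mul_comm a (Real.sqrt b), mul_div_assoc, Real.div_sqrt]; exact mul_comm _ _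
    nlinarith [h3, h4, hsa, hsb, hla, hlb]

lemma sqrt_gap {θ M a b : ℝ} (hθ : 0 < θ) (ha : 0 ≤ a) (hb : 0 < b) (hbM : b ≤ M)
    (hab : θ ≤ |a - b|) :
    θ ^ 2 / (4 * (M + θ)) ≤ (Real.sqrt a - Real.sqrt b) ^ 2 := by
  have hM : 0 < M := lt_of_lt_of_le hb hbM
  have hMθ : 0 < M + θ := by linarith
  have hr : Real.sqrt (M + θ) ^ 2 = M + θ := Real.sq_sqrt hMθ.le
  have hr0 : 0 < Real.sqrt (M + θ) := Real.sqrt_pos.2 hMθ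
  set r : ℝ := θ / (2 * Real.sqrt (M + θ)) with hrdef
  have hrpos : 0 < r := div_pos hθ (by positivity)
  have hr2 : r ^ 2 = θ ^ 2 / (4 * (M + θ)) := by
    rw [hrdef, div_pow, mul_pow, hr]; norm_num
  have key : ∀ u v : ℝ, 0 ≤ u → u ≤ v → v ≤ M + θ → v - u = θ →
      r ≤ Real.sqrt v - Real.sqrt u := by
    intro u v hu huv hvM hvu
    have hv0 : 0 < v := by linarith
    have hsv : Real.sqrt v ^ 2 = v := Real.sq_sqrt hv0.le
    have hsu : Real.sqrt u ^ 2 = u := Real.sq_sqrt hu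
    have hsum : 0 < Real.sqrt v + Real.sqrt u := by
      have := Real.sqrt_pos.2 hv0; positivity
    have hprod : (Real.sqrt v - Real.sqrt u) * (Real.sqrt v + Real.sqrt u) = θ := by
      nlinarith [hsv, hsu]
    have hformula : Real.sqrt v - Real.sqrt u = θ / (Real.sqrt v + Real.sqrt u) := by
      field_simp [hsum.ne'] ; linarith [hprod]
    rw [hformula, hrdef]
    apply div_le_div_of_nonneg_left hθ.le hsum
    have h1 : Real.sqrt v ≤ Real.sqrt (M + θ) := Real.sqrt_le_sqrt hvM
    have h2 : Real.sqrt u ≤ Real.sqrt (M + θ) := Real.sqrt_le_sqrt (by linarith)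
    linarith
  rw [← hr2]
  rcases le_abs.mp hab with h | h
  · -- a ≥ b + θ
    have h1 : r ≤ Real.sqrt (b + θ) - Real.sqrt b :=
      key b (b + θ) hb.le (by linarith) (by linarith) (by ring)
    have h2 : Real.sqrt (b + θ) ≤ Real.sqrt a := Real.sqrt_le_sqrt (by linarith)
    have h3 : r ≤ Real.sqrt a - Real.sqrt b := by linarith
    calc r ^ 2 ≤ (Real.sqrt a - Real.sqrt b) ^ 2 := by nlinarith
      _ = _ := rfl
  · -- a ≤ b - θ
    have h1 : r ≤ Real.sqrt b - Real.sqrt (b - θ) :=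
      key (b - θ) b (by linarith) (by linarith) (by linarith) (by ring)
    have h2 : Real.sqrt a ≤ Real.sqrt (b - θ) := Real.sqrt_le_sqrt (by linarith)
    have h3 : r ≤ Real.sqrt b - Real.sqrt a := by linarith
    nlinarith


set_option maxHeartbeats 1000000 in
/-- If ρₙ ≥ 0 are bounded in L^{γ+1}, converge weakly in L¹ to ρ, and the weak limit of
ρₙ log ρₙ equals ρ log ρ a.e., then ρₙ → ρ strongly in L¹. -/
theorem stmt_13 {α : Type*} [MeasurableSpace α] (μ : Measure α) [IsFiniteMeasure μ]
    (γ : ℝ) (hγ : 0 < γ)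
    (ρn : ℕ → α → ℝ) (ρ : α → ℝ)
    (hpos : ∀ n x, 0 ≤ ρn n x)
    (hmeas : ∀ n, Measurable (ρn n)) (hρmeas : Measurable ρ)
    (hint : ∀ n, Integrable (fun x => ρn n x ^ (γ + 1)) μ)
    (hbdd : ∃ C : ℝ, ∀ n, ∫ x, ρn n x ^ (γ + 1) ∂μ ≤ C)
    (hρint : Integrable ρ μ)
    (hw : ∀ φ : α → ℝ, Measurable φ → (∃ C, ∀ x, |φ x| ≤ C) →
      Tendsto (fun n => ∫ x, ρn n x * φ x ∂μ) atTop (𝓝 (∫ x, ρ x * φ x ∂μ)))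
    (hwlog : ∀ φ : α → ℝ, Measurable φ → (∃ C, ∀ x, |φ x| ≤ C) →
      Tendsto (fun n => ∫ x, ρn n x * Real.log (ρn n x) * φ x ∂μ) atTop
        (𝓝 (∫ x, ρ x * Real.log (ρ x) * φ x ∂μ))) :
    Tendsto (fun n => ∫ x, |ρn n x - ρ x| ∂μ) atTop (𝓝 0) := by
  obtain ⟨C, hC⟩ := hbdd
  have hrpow_nn : ∀ n x, (0:ℝ) ≤ ρn n x ^ (γ + 1) := fun n x => Real.rpow_nonneg (hpos n x) _
  have hCnn : 0 ≤ C :=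
    le_trans (integral_nonneg (fun x => hrpow_nn 0 x)) (hC 0)
  set V : ℝ := (μ Set.univ).toReal with hV
  have hVnn : 0 ≤ V := ENNReal.toReal_nonneg
  -- pointwise bounds
  have hzle : ∀ z : ℝ, 0 ≤ z → z ≤ 1 + z ^ (γ + 1) := by
    intro z hz
    rcases le_total z 1 with h | h
    · have := Real.rpow_nonneg hz (γ + 1); linarith
    · have h2 : z ≤ z ^ (γ + 1) := by
        nth_rewrite 1 [← Real.rpow_one z]
        exact Real.rpow_le_rpow_of_exponent_le h (by linarith)
      linarith
  have hzlog : ∀ z : ℝ, 0 ≤ z → |z * Real.log z| ≤ 1 + z ^ (γ + 1) / γ := by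
    intro z hz
    have hd : 0 ≤ z ^ (γ + 1) / γ := div_nonneg (Real.rpow_nonneg hz _) hγ.le
    rcases le_total z 1 with h | h
    · have hup : z * Real.log z ≤ 0 :=
        mul_nonpos_of_nonneg_of_nonpos hz (Real.log_nonpos hz h)
      have hlow : -1 ≤ z * Real.log z := by
        rcases eq_or_lt_of_le hz with h0 | h0
        · simp [← h0]
        · have := Real.log_le_sub_one_of_pos (inv_pos.2 h0)
          rw [Real.log_inv] at this
          -- -log z ≤ z⁻¹ - 1
          have h2 : -(z * Real.log z) ≤ z * (z⁻¹ - 1) :=  by nlinarith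
          have h3 : z * z⁻¹ = 1 := mul_inv_cancel₀ h0.ne'
          nlinarith
      rw [abs_le]; constructor <;> [linarith; linarith]
    · have h0 : 0 < z := lt_of_lt_of_le zero_lt_one h
      have hlog0 : 0 ≤ Real.log z := Real.log_nonneg h
      have h1 : Real.log (z ^ γ) = γ * Real.log z := Real.log_rpow h0 γ
      have h2 : Real.log (z ^ γ) ≤ z ^ γ - 1 :=
        Real.log_le_sub_one_of_pos (Real.rpow_pos_of_pos h0 γ)
      have h3 : Real.log z ≤ z ^ γ / γ := by
        rw [le_div_iff₀ hγ]; nlinarith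
      have h4 : z ^ (γ + 1) = z ^ γ * z := by
        rw [Real.rpow_add h0, Real.rpow_one]
      have h5 : z * Real.log z ≤ z ^ (γ + 1) / γ := by
        rw [h4]
        calc z * Real.log z ≤ z * (z ^ γ / γ) := mul_le_mul_of_nonneg_left h3 hz
          _ = z ^ γ * z / γ := by ring
      rw [abs_of_nonneg (mul_nonneg hz hlog0)]; linarith
  have hρn_int : ∀ n, Integrable (ρn n) μ := by
    intro n
    refine ((integrable_const (1:ℝ)).add (hint n)).mono'
      (hmeas n).aestronglyMeasurable (ae_of_all _ fun x => ?_)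
    rw [Real.norm_eq_abs, abs_of_nonneg (hpos n x)]
    exact hzle _ (hpos n x)
  have hFn_int : ∀ n, Integrable (fun x => ρn n x * Real.log (ρn n x)) μ := by
    intro n
    refine ((integrable_const (1:ℝ)).add ((hint n).div_const γ)).mono'
      ((hmeas n).mul (hmeas n).log).aestronglyMeasurable (ae_of_all _ fun x => ?_)
    rw [Real.norm_eq_abs]
    exact hzlog _ (hpos n x)
  -- integrable × bounded products
  have hmulint : ∀ (f : α → ℝ), Integrable f μ → ∀ (φ : α → ℝ), Measurable φ →
      (∃ c0 : ℝ, ∀ x, |φ x| ≤ c0) →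
      Integrable (fun x => f x * φ x) μ := by
    intro f hf φ hφ hbd
    obtain ⟨c0, hc0⟩ := hbd
    have h := hf.bdd_mul hφ.aestronglyMeasurable
      (c := c0) (ae_of_all _ fun x => by rw [Real.norm_eq_abs]; exact hc0 x)
    simpa [mul_comm] using h
  -- ρ ≥ 0 a.e.
  have hρ0 : μ {x | ρ x < 0} = 0 := by
    set N := {x | ρ x < 0} with hNdef
    have hN : MeasurableSet N := measurableSet_lt hρmeas measurable_const
    set φN : α → ℝ := N.indicator (fun _ => (1:ℝ)) with hφN
    have hφNm : Measurable φN := measurable_const.indicator hN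
    have hφNb : ∃ c0 : ℝ, ∀ x, |φN x| ≤ c0 :=
      ⟨1, fun x => by by_cases hx : x ∈ N <;> simp [hφN, hx]⟩
    have ht := hw φN hφNm hφNb
    have hnn : ∀ n, 0 ≤ ∫ x, ρn n x * φN x ∂μ := by
      intro n; apply integral_nonneg; intro x
      by_cases hx : x ∈ N <;>
        simp [hφN, hx, hpos n x, mul_nonneg (hpos n x)]
    have hlim : 0 ≤ ∫ x, ρ x * φN x ∂μ := ge_of_tendsto ht (Eventually.of_forall hnn)
    have heq : (fun x => ρ x * φN x) = N.indicator ρ := by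
      ext x; by_cases hx : x ∈ N <;> simp [hφN, hx]
    rw [heq, integral_indicator hN] at hlim
    have hnonneg : 0 ≤ᵐ[μ.restrict N] fun x => -ρ x :=
      (ae_restrict_iff' hN).2 (ae_of_all _ fun x hx => by
        simp only [Pi.zero_apply]
        have : ρ x < 0 := hx
        linarith)
    have hneg : ∫ x in N, -ρ x ∂μ = 0 := by
      have h1 : ∫ x in N, -ρ x ∂μ ≤ 0 := by rw [integral_neg]; linarith
      have h2 : 0 ≤ ∫ x in N, -ρ x ∂μ :=
        setIntegral_nonneg hN (fun x hx => by
          have : ρ x < 0 := hx; linarith)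
      linarith
    have hae := (setIntegral_eq_zero_iff_of_nonneg_ae hnonneg
      hρint.neg.restrict).mp hneg
    have h3 : ∀ᵐ x ∂(μ.restrict N), False := by
      filter_upwards [hae, self_mem_ae_restrict hN] with x hx hxN
      simp only [Pi.zero_apply, neg_eq_zero] at hx
      have : ρ x < 0 := hxN
      exact absurd hx (ne_of_lt this)
    have h5 : μ.restrict N Set.univ = 0 := by simpa [ae_iff] using h3
    rw [Measure.restrict_apply_univ] at h5
    exact h5
  -- absolute continuity of ∫ |ρ|
  have habs : ∀ η : ℝ, 0 < η → ∃ δ₁ : ℝ, 0 < δ₁ ∧ ∀ s : Set α, MeasurableSet s →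
      μ s ≤ ENNReal.ofReal δ₁ → ∫ x, Set.indicator s (fun y => |ρ y|) x ∂μ ≤ η := by
    intro η hη
    have hfin : ∫⁻ x, (‖ρ x‖₊ : ℝ≥0∞) ∂μ ≠ ∞ := ne_of_lt hρint.2
    obtain ⟨d, hd0, hd⟩ := exists_pos_setLIntegral_lt_of_measure_lt hfin
      (ε := ENNReal.ofReal η) (ne_of_gt (ENNReal.ofReal_pos.2 hη))
    set d' : ℝ≥0∞ := min d 1 with hd'def
    have hd'0 : 0 < d' := lt_min hd0 zero_lt_one
    have hd'top : d' ≠ ∞ := ((min_le_right d 1).trans_lt (by norm_num)).ne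
    have htr : 0 < d'.toReal := ENNReal.toReal_pos hd'0.ne' hd'top
    refine ⟨d'.toReal / 2, by positivity, fun s hs hμs => ?_⟩
    have hμs' : μ s < d := by
      calc μ s ≤ ENNReal.ofReal (d'.toReal / 2) := hμs
        _ < ENNReal.ofReal d'.toReal := by
            rw [ENNReal.ofReal_lt_ofReal_iff htr]; linarith
        _ = d' := ENNReal.ofReal_toReal hd'top
        _ ≤ d := min_le_left _ _
    have hlint := hd s hμs'
    rw [integral_indicator hs]
    have h1 : ENNReal.ofReal (∫ x in s, ‖ρ x‖ ∂μ) = ∫⁻ x in s, ‖ρ x‖₊ ∂μ :=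
      ofReal_integral_norm_eq_lintegral_enorm (hρint.restrict (s := s))
    have h2 : ENNReal.ofReal (∫ x in s, ‖ρ x‖ ∂μ) < ENNReal.ofReal η := h1 ▸ hlint
    have h3 : ∫ x in s, ‖ρ x‖ ∂μ < η := by
      rw [ENNReal.ofReal_lt_ofReal_iff hη] at h2
      exact h2
    have h4 : ∫ x in s, |ρ x| ∂μ = ∫ x in s, ‖ρ x‖ ∂μ := by
      simp [Real.norm_eq_abs]
    linarith
  -- Step B : convergence in measure
  have hBadmeas : ∀ (θ : ℝ) (n : ℕ), MeasurableSet {x | θ ≤ |ρn n x - ρ x|} := fun θ n =>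
    measurableSet_le measurable_const ((hmeas n).sub hρmeas).abs
  have hB : ∀ θ : ℝ, 0 < θ → ∀ β : ℝ, 0 < β → ∀ᶠ n in atTop,
      (μ {x | θ ≤ |ρn n x - ρ x|}).toReal ≤ β := by
    intro θ hθ β hβ
    set Iρ : ℝ := ∫ x, |ρ x| ∂μ with hIρ
    have hIρnn : 0 ≤ Iρ := integral_nonneg (fun x => abs_nonneg _)
    set M : ℝ := max 1 (4 * (Iρ + 1) / β) with hM
    have hM1 : (1:ℝ) ≤ M := le_max_left _ _
    have hM0 : 0 < M := lt_of_lt_of_le zero_lt_one hM1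
    set T : Set α := {x | M < ρ x} with hT
    have hTm : MeasurableSet T := measurableSet_lt measurable_const hρmeas
    have hTmark : (μ T).toReal * M ≤ Iρ := by
      have hle : ∀ x, T.indicator (fun _ => M) x ≤ |ρ x| := by
        intro x; by_cases hx : x ∈ T
        · rw [Set.indicator_of_mem hx]
          have hxx : M < ρ x := hx
          rw [abs_of_nonneg (by linarith)]; linarith
        · rw [Set.indicator_of_notMem hx]; exact abs_nonneg _
      have h2 := integral_mono ((integrable_const M).indicator hTm) hρint.abs hle
      rwa [integral_indicator_const _ hTm, smul_eq_mul] at h2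
    have hTμ : (μ T).toReal ≤ β / 4 := by
      have h1 : 4 * (Iρ + 1) / β ≤ M := le_max_right _ _
      have h2 : 4 * (Iρ + 1) ≤ M * β := by rw [div_le_iff₀ hβ] at h1; linarith
      nlinarith [ENNReal.toReal_nonneg (a := μ T)]
    set δ : ℝ := min (θ/2) (θ*β/(8*(V+1))) with hδ
    have hV1 : (0:ℝ) < V + 1 := by linarith
    have hδ0 : 0 < δ := lt_min (by linarith) (by positivity)
    have hδθ : δ ≤ θ/2 := min_le_left _ _
    have hδβ : δ * (V+1) ≤ (θ/2) * (β/4) := by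
      have h1 : δ ≤ θ*β/(8*(V+1)) := min_le_right _ _
      calc δ * (V+1) ≤ (θ*β/(8*(V+1))) * (V+1) := by nlinarith
        _ = θ*β/8 := by field_simp
        _ = (θ/2)*(β/4) := by ring
    set A : Set α := {x | δ ≤ ρ x} ∩ {x | ρ x ≤ M} with hA
    have hAm : MeasurableSet A := (measurableSet_le measurable_const hρmeas).inter
      (measurableSet_le hρmeas measurable_const)
    have hMθ : (0:ℝ) < M + θ := by linarith
    set c : ℝ := θ^2/(4*(M+θ)) with hc
    have hc0 : 0 < c := div_pos (by positivity) (by linarith)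
    set φA : α → ℝ := A.indicator (fun _ => 1) with hφA
    have hφAm : Measurable φA := measurable_const.indicator hAm
    have hφAb : ∃ c0 : ℝ, ∀ x, |φA x| ≤ c0 :=
      ⟨1, fun x => by by_cases hx : x ∈ A <;> simp [hφA, hx]⟩
    have hlogbound : ∀ x, x ∈ A → |Real.log (ρ x)| ≤ |Real.log δ| + |Real.log M| := by
      intro x hx
      have hx1 : δ ≤ ρ x := hx.1
      have hx2 : ρ x ≤ M := hx.2
      have hl1 : Real.log δ ≤ Real.log (ρ x) := Real.log_le_log hδ0 hx1
      have hl2 : Real.log (ρ x) ≤ Real.log M := Real.log_le_log (by linarith) hx2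
      rw [abs_le]
      constructor
      · have := neg_abs_le (Real.log δ); linarith [abs_nonneg (Real.log M)]
      · have := le_abs_self (Real.log M); linarith [abs_nonneg (Real.log δ)]
    set ψ : α → ℝ := A.indicator (fun x => 1 + Real.log (ρ x)) with hψ
    have hψm : Measurable ψ := (measurable_const.add hρmeas.log).indicator hAm
    have hψb : ∃ c0 : ℝ, ∀ x, |ψ x| ≤ c0 := by
      refine ⟨1 + (|Real.log δ| + |Real.log M|), fun x => ?_⟩
      by_cases hx : x ∈ A
      · rw [hψ, Set.indicator_of_mem hx]
        have := hlogbound x hx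
        rw [abs_le] at this ⊢
        constructor <;> [linarith [this.1]; linarith [this.2]]
      · rw [hψ, Set.indicator_of_notMem hx]
        simp [abs_nonneg]
        positivity
    set S : Set α := {x | ρ x < δ} with hS
    have hSm : MeasurableSet S := measurableSet_lt hρmeas measurable_const
    set φS : α → ℝ := S.indicator (fun _ => 1) with hφS
    have hφSm : Measurable φS := measurable_const.indicator hSm
    have hφSb : ∃ c0 : ℝ, ∀ x, |φS x| ≤ c0 :=
      ⟨1, fun x => by by_cases hx : x ∈ S <;> simp [hφS, hx]⟩
    have t1 := hwlog φA hφAm hφAb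
    have t2 := hw ψ hψm hψb
    have t3 := t1.sub t2
    have e1 : ∀ᶠ n in atTop,
        (∫ x, ρn n x * Real.log (ρn n x) * φA x ∂μ) - (∫ x, ρn n x * ψ x ∂μ)
        < ((∫ x, ρ x * Real.log (ρ x) * φA x ∂μ) - (∫ x, ρ x * ψ x ∂μ)) + c * (β/4) := by
      refine t3.eventually_lt_const ?_
      have := mul_pos hc0 (by linarith : (0:ℝ) < β/4)
      linarith
    have t4 := hw φS hφSm hφSb
    have hρφS : ∫ x, ρ x * φS x ∂μ ≤ V * δ := by
      have hle : ∀ x, ρ x * φS x ≤ δ := by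
        intro x; by_cases hx : x ∈ S
        · rw [hφS, Set.indicator_of_mem hx, mul_one]
          exact le_of_lt hx
        · rw [hφS, Set.indicator_of_notMem hx, mul_zero]
          exact hδ0.le
      calc ∫ x, ρ x * φS x ∂μ ≤ ∫ _x, δ ∂μ :=
            integral_mono (hmulint ρ hρint φS hφSm hφSb)
              (integrable_const δ) hle
        _ = V * δ := by rw [integral_const, smul_eq_mul]; rfl
    have e2 : ∀ᶠ n in atTop, ∫ x, ρn n x * φS x ∂μ < δ * (V+1) :=
      t4.eventually_lt_const (by nlinarith)
    filter_upwards [e1, e2] with n hn1 hn2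
    set Bad : Set α := {x | θ ≤ |ρn n x - ρ x|} with hBad
    have hBm : MeasurableSet Bad := hBadmeas θ n
    set Tn : Set α := {x | θ/2 ≤ ρn n x} with hTn
    have hTnm : MeasurableSet Tn := measurableSet_le measurable_const (hmeas n)
    have ha : (μ (S ∩ Tn)).toReal ≤ β / 4 := by
      have hle : ∀ x, (S ∩ Tn).indicator (fun _ => θ/2) x ≤ ρn n x * φS x := by
        intro x; by_cases hx : x ∈ S ∩ Tn
        · rw [Set.indicator_of_mem hx, hφS, Set.indicator_of_mem hx.1, mul_one]
          exact hx.2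
        · rw [Set.indicator_of_notMem hx]
          apply mul_nonneg (hpos n x)
          rw [hφS]
          by_cases hxS : x ∈ S
          · rw [Set.indicator_of_mem hxS]; norm_num
          · rw [Set.indicator_of_notMem hxS]
      have h2 := integral_mono ((integrable_const (θ/2)).indicator (hSm.inter hTnm))
        (hmulint _ (hρn_int n) φS hφSm hφSb) hle
      rw [integral_indicator_const _ (hSm.inter hTnm), smul_eq_mul, measureReal_def] at h2
      nlinarith [ENNReal.toReal_nonneg (a := μ (S ∩ Tn))]
    have hbq : (μ (A ∩ Bad)).toReal ≤ β / 4 := by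
      set G : α → ℝ := fun x => ρn n x * Real.log (ρn n x) * φA x
        - ρ x * Real.log (ρ x) * φA x - (ρn n x * ψ x - ρ x * ψ x) with hG
      have hle : ∀ x, (A ∩ Bad).indicator (fun _ => c) x ≤ G x := by
        intro x
        by_cases hxA : x ∈ A
        · have hρx : δ ≤ ρ x := hxA.1
          have hρM : ρ x ≤ M := hxA.2
          have hρpos : 0 < ρ x := lt_of_lt_of_le hδ0 hρx
          have hkey : (Real.sqrt (ρn n x) - Real.sqrt (ρ x))^2 ≤ G x := by
            have h0 := convex_key (hpos n x) hρpos
            have hGx : G x = ρn n x * Real.log (ρn n x) - ρ x * Real.log (ρ x)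
                - (1 + Real.log (ρ x)) * (ρn n x - ρ x) := by
              simp only [hG, hφA, hψ, Set.indicator_of_mem hxA]
              ring
            rw [hGx]; exact h0
          by_cases hxB : x ∈ Bad
          · rw [Set.indicator_of_mem (Set.mem_inter hxA hxB)]
            have hxb : θ ≤ |ρn n x - ρ x| := hxB
            have h2 := sqrt_gap hθ (hpos n x) hρpos hρM hxb
            calc c = θ^2/(4*(M+θ)) := hc
              _ ≤ _ := le_trans h2 hkey
          · rw [Set.indicator_of_notMem (fun h => hxB h.2)]
            exact le_trans (sq_nonneg _) hkey
        · rw [Set.indicator_of_notMem (fun h => hxA h.1)]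
          simp only [hG, hφA, hψ, Set.indicator_of_notMem hxA]
          ring_nf
          exact le_refl 0
      have hg1 : Integrable (fun x => ρn n x * Real.log (ρn n x) * φA x) μ :=
        hmulint _ (hFn_int n) φA hφAm hφAb
      have hg2 : Integrable (fun x => ρ x * Real.log (ρ x) * φA x) μ := by
        refine (integrable_const (M * (|Real.log δ| + |Real.log M|))).mono'
          ((hρmeas.mul hρmeas.log).mul hφAm).aestronglyMeasurable (ae_of_all _ fun x => ?_)
        rw [Real.norm_eq_abs]
        by_cases hx : x ∈ A
        · rw [hφA, Set.indicator_of_mem hx, mul_one, abs_mul]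
          have hx1 : δ ≤ ρ x := hx.1
          have hx2 : ρ x ≤ M := hx.2
          have h1 : |ρ x| ≤ M := by
            rw [abs_of_nonneg (by linarith : (0:ℝ) ≤ ρ x)]; exact hx2
          exact mul_le_mul h1 (hlogbound x hx) (abs_nonneg _) hM0.le
        · rw [hφA, Set.indicator_of_notMem hx, mul_zero, abs_zero]
          positivity
      have hg3 : Integrable (fun x => ρn n x * ψ x) μ :=
        hmulint _ (hρn_int n) ψ hψm hψb
      have hg4 : Integrable (fun x => ρ x * ψ x) μ := by
        refine (integrable_const (M * (1 + (|Real.log δ| + |Real.log M|)))).mono'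
          (hρmeas.mul hψm).aestronglyMeasurable (ae_of_all _ fun x => ?_)
        rw [Real.norm_eq_abs, abs_mul]
        by_cases hx : x ∈ A
        · have hx1 : δ ≤ ρ x := hx.1
          have hx2 : ρ x ≤ M := hx.2
          have h1 : |ρ x| ≤ M := by
            rw [abs_of_nonneg (by linarith : (0:ℝ) ≤ ρ x)]; exact hx2
          have h2 : |ψ x| ≤ 1 + (|Real.log δ| + |Real.log M|) := by
            rw [hψ, Set.indicator_of_mem hx]
            have := hlogbound x hx
            rw [abs_le] at this ⊢
            constructor <;> [linarith [this.1]; linarith [this.2]]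
          exact mul_le_mul h1 h2 (abs_nonneg _) hM0.le
        · rw [hψ, Set.indicator_of_notMem hx, abs_zero, mul_zero]
          positivity
      have hGint : Integrable G μ := (hg1.sub hg2).sub (hg3.sub hg4)
      have hintineq := integral_mono ((integrable_const c).indicator (hAm.inter hBm))
        hGint hle
      rw [integral_indicator_const _ (hAm.inter hBm), smul_eq_mul, measureReal_def] at hintineq
      have hGval : ∫ x, G x ∂μ = (∫ x, ρn n x * Real.log (ρn n x) * φA x ∂μ)
          - (∫ x, ρ x * Real.log (ρ x) * φA x ∂μ)
          - ((∫ x, ρn n x * ψ x ∂μ) - (∫ x, ρ x * ψ x ∂μ)) := by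
        have hg12 : Integrable (fun x => ρn n x * Real.log (ρn n x) * φA x
            - ρ x * Real.log (ρ x) * φA x) μ := hg1.sub hg2
        have hg34 : Integrable (fun x => ρn n x * ψ x - ρ x * ψ x) μ := hg3.sub hg4
        simp only [hG]
        rw [integral_sub hg12 hg34, integral_sub hg1 hg2, integral_sub hg3 hg4]
      have hGlt : ∫ x, G x ∂μ < c * (β/4) := by rw [hGval]; linarith
      nlinarith [ENNReal.toReal_nonneg (a := μ (A ∩ Bad))]
    have hsub : Bad ⊆ (S ∩ Tn) ∪ T ∪ (A ∩ Bad) ∪ {x | ρ x < 0} := by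
      intro x hx
      simp only [Set.mem_union]
      by_cases hneg : ρ x < 0
      · exact Or.inr hneg
      push_neg at hneg
      rcases lt_or_ge (ρ x) δ with h1 | h1
      · have hxb : θ ≤ |ρn n x - ρ x| := hx
        rcases le_abs.mp hxb with h2 | h2
        · exact Or.inl (Or.inl (Or.inl ⟨h1, by
            show θ/2 ≤ ρn n x; linarith⟩))
        · exfalso; have := hpos n x; linarith
      rcases le_or_gt (ρ x) M with h3 | h3
      · exact Or.inl (Or.inr ⟨⟨h1, h3⟩, hx⟩)
      · exact Or.inl (Or.inl (Or.inr h3))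
    have hne : ∀ s : Set α, μ s ≠ ∞ := fun s => measure_ne_top μ s
    have hμsub : μ Bad ≤ μ (S ∩ Tn) + μ T + μ (A ∩ Bad) := by
      calc μ Bad ≤ μ ((S ∩ Tn) ∪ T ∪ (A ∩ Bad) ∪ {x | ρ x < 0}) := measure_mono hsub
        _ ≤ μ ((S ∩ Tn) ∪ T ∪ (A ∩ Bad)) + μ {x | ρ x < 0} := measure_union_le _ _
        _ = μ ((S ∩ Tn) ∪ T ∪ (A ∩ Bad)) := by rw [hρ0, add_zero]
        _ ≤ μ ((S ∩ Tn) ∪ T) + μ (A ∩ Bad) := measure_union_le _ _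
        _ ≤ μ (S ∩ Tn) + μ T + μ (A ∩ Bad) := by
            gcongr
            exact measure_union_le _ _
    have hto := ENNReal.toReal_mono
      (by exact ENNReal.add_ne_top.2 ⟨ENNReal.add_ne_top.2 ⟨hne _, hne _⟩, hne _⟩) hμsub
    rw [ENNReal.toReal_add (ENNReal.add_ne_top.2 ⟨hne _, hne _⟩) (hne _),
      ENNReal.toReal_add (hne _) (hne _)] at hto
    linarith
  -- Step C : conclusion
  rw [NormedAddCommGroup.tendsto_nhds_zero]
  intro ε hε
  set θ : ℝ := ε / (4 * (V + 1)) with hθdef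
  have hV1 : (0:ℝ) < V + 1 := by linarith
  have hθ : 0 < θ := by positivity
  set X : ℝ := 8 * (C + 1) / ε with hXdef
  have hX0 : 0 ≤ X := by positivity
  set K : ℝ := max 1 (X ^ (γ⁻¹)) with hKdef
  have hK1 : (1:ℝ) ≤ K := le_max_left _ _
  have hK0 : 0 < K := lt_of_lt_of_le zero_lt_one hK1
  have hKγpos : 0 < K ^ γ := Real.rpow_pos_of_pos hK0 γ
  have hKγ : X ≤ K ^ γ := by
    have h1 : (X ^ (γ⁻¹)) ^ γ = X := by
      rw [← Real.rpow_mul hX0]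
      rw [inv_mul_cancel₀ hγ.ne', Real.rpow_one]
    have h2 : (X ^ (γ⁻¹)) ^ γ ≤ K ^ γ :=
      Real.rpow_le_rpow (Real.rpow_nonneg hX0 _) (le_max_right _ _) hγ.le
    linarith
  obtain ⟨δ₁, hδ₁0, hδ₁⟩ := habs (ε/8) (by positivity)
  set β : ℝ := min δ₁ (ε / (8 * K)) with hβdef
  have hβ0 : 0 < β := lt_min hδ₁0 (by positivity)
  filter_upwards [hB θ hθ β hβ0] with n hn
  set Bad : Set α := {x | θ ≤ |ρn n x - ρ x|} with hBad
  have hBm : MeasurableSet Bad := hBadmeas θ n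
  -- pointwise bound
  have hptwise : ∀ x, |ρn n x - ρ x| ≤ θ + (Bad.indicator (ρn n) x
      + Bad.indicator (fun y => |ρ y|) x) := by
    intro x
    by_cases hx : x ∈ Bad
    · rw [Set.indicator_of_mem hx, Set.indicator_of_mem hx]
      have h1 : |ρn n x - ρ x| ≤ |ρn n x| + |ρ x| := abs_sub _ _
      rw [abs_of_nonneg (hpos n x)] at h1
      linarith
    · rw [Set.indicator_of_notMem hx, Set.indicator_of_notMem hx]
      have h1 : ¬ θ ≤ |ρn n x - ρ x| := hx
      push_neg at h1
      linarith
  have hind1 : Integrable (Bad.indicator (ρn n)) μ := (hρn_int n).indicator hBm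
  have hind2 : Integrable (Bad.indicator (fun y => |ρ y|)) μ := hρint.abs.indicator hBm
  have hind12 : Integrable (fun x => Bad.indicator (ρn n) x
      + Bad.indicator (fun y => |ρ y|) x) μ := hind1.add hind2
  have hconstθ : Integrable (fun _ : α => θ) μ := integrable_const θ
  have hsum : Integrable (fun x => θ + (Bad.indicator (ρn n) x
      + Bad.indicator (fun y => |ρ y|) x)) μ := hconstθ.add hind12
  have hbound1 := integral_mono ((hρn_int n).sub hρint).abs hsum hptwise
  simp only [Pi.sub_apply] at hbound1
  rw [integral_add hconstθ hind12, integral_add hind1 hind2, integral_const,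
    smul_eq_mul] at hbound1
  -- bound ∫ Bad.indicator ρn
  have hbound2 : ∫ x, Bad.indicator (ρn n) x ∂μ ≤ K * (μ Bad).toReal + C / K ^ γ := by
    have hle : ∀ x, Bad.indicator (ρn n) x
        ≤ Bad.indicator (fun _ => K) x + ρn n x ^ (γ + 1) / K ^ γ := by
      intro x
      by_cases hx : x ∈ Bad
      · rw [Set.indicator_of_mem hx, Set.indicator_of_mem hx]
        rcases le_or_gt (ρn n x) K with h1 | h1
        · have : 0 ≤ ρn n x ^ (γ + 1) / K ^ γ :=
            div_nonneg (hrpow_nn n x) hKγpos.le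
          linarith
        · have hz0 : 0 < ρn n x := lt_trans hK0 h1
          have h2 : K ^ γ ≤ ρn n x ^ γ :=
            Real.rpow_le_rpow hK0.le h1.le hγ.le
          have h3 : ρn n x ^ (γ + 1) = ρn n x ^ γ * ρn n x := by
            rw [Real.rpow_add hz0, Real.rpow_one]
          have h4 : ρn n x ≤ ρn n x ^ (γ + 1) / K ^ γ := by
            rw [le_div_iff₀ hKγpos, h3]
            nlinarith
          linarith
      · rw [Set.indicator_of_notMem hx, Set.indicator_of_notMem hx]
        have := div_nonneg (hrpow_nn n x) hKγpos.le
        linarith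
    have hdivint : Integrable (fun x => ρn n x ^ (γ + 1) / K ^ γ) μ :=
      (hint n).div_const (K ^ γ)
    have hsum2 : Integrable (fun x => Bad.indicator (fun _ => K) x
        + ρn n x ^ (γ + 1) / K ^ γ) μ := ((integrable_const K).indicator hBm).add hdivint
    have h5 := integral_mono hind1 hsum2 hle
    rw [integral_add ((integrable_const K).indicator hBm) hdivint,
      integral_indicator_const _ hBm, smul_eq_mul, integral_div] at h5
    have h6 : (∫ x, ρn n x ^ (γ + 1) ∂μ) / K ^ γ ≤ C / K ^ γ :=
      div_le_div_of_nonneg_right (hC n) hKγpos.le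
    calc ∫ x, Bad.indicator (ρn n) x ∂μ
        ≤ (μ Bad).toReal * K + (∫ x, ρn n x ^ (γ + 1) ∂μ) / K ^ γ := h5
      _ ≤ K * (μ Bad).toReal + C / K ^ γ := by rw [mul_comm]; linarith
  have hKμ : K * (μ Bad).toReal ≤ ε / 8 := by
    have h1 : (μ Bad).toReal ≤ ε / (8 * K) := le_trans hn (min_le_right _ _)
    have h2 : K * (μ Bad).toReal ≤ K * (ε / (8 * K)) :=
      mul_le_mul_of_nonneg_left h1 hK0.le
    have h3 : K * (ε / (8 * K)) = ε / 8 := by field_simp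
    linarith
  have hCK : C / K ^ γ ≤ ε / 8 := by
    have h1 : X * ε = 8 * (C + 1) := by rw [hXdef]; field_simp
    rw [div_le_div_iff₀ hKγpos (by norm_num : (0:ℝ) < 8)]
    nlinarith
  -- bound ∫ Bad.indicator |ρ|
  have hbound3 : ∫ x, Bad.indicator (fun y => |ρ y|) x ∂μ ≤ ε / 8 := by
    apply hδ₁ Bad hBm
    have h1 : (μ Bad).toReal ≤ δ₁ := le_trans hn (min_le_left _ _)
    exact (ENNReal.le_ofReal_iff_toReal_le (measure_ne_top μ _) hδ₁0.le).2 h1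
  have hθV : θ * V ≤ ε / 4 := by
    have h1 : θ * (V + 1) = ε / 4 := by rw [hθdef]; field_simp
    nlinarith
  have hnn : 0 ≤ ∫ x, |ρn n x - ρ x| ∂μ := integral_nonneg (fun x => abs_nonneg _)
  have habseq : ∫ x, |(fun x => ρn n x - ρ x) x| ∂μ = ∫ x, |ρn n x - ρ x| ∂μ := rfl
  rw [Real.norm_eq_abs, abs_of_nonneg hnn]
  calc ∫ x, |ρn n x - ρ x| ∂μ
      ≤ θ * V + (∫ x, Bad.indicator (ρn n) x ∂μ
        + ∫ x, Bad.indicator (fun y => |ρ y|) x ∂μ) := by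
        have : μ.real Set.univ * θ = θ * V := mul_comm _ _
        linarith [hbound1]
    _ ≤ ε/4 + (K * (μ Bad).toReal + C / K ^ γ + ε/8) := by linarith
    _ ≤ ε/4 + (ε/8 + ε/8 + ε/8) := by linarith
    _ < ε := by linarith
end
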